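/- arXiv:1807.03604 — 9 statements merged into one kernel-verified Lean document; each statement's English description precedes it below -/
import Mathlib

section
/- Let G = (V,E) be a bipartite graph and let β be an optimal solution to the LP relaxation of vertex cover (minimize Σ x_v subject to x_u + x_v ≥ 1 for all edges {u,v} and x_v ≥ 0). Define β' by rounding: β'(x_v) = 0 if β(x_v) < 1/2, β'(x_v) = 1/2 if β(x_v) = 1/2, and β'(x_v) = 1 if β(x_v) > 1/2. Then β' is a feasible and optimal solution of the same LP. -/
/-- Feasibility for the LP relaxation of vertex cover on `G`:
all values are nonnegative and every edge is fractionally covered. -/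
def LPFeasible {V : Type*} (G : SimpleGraph V) (x : V → ℝ) : Prop :=
  (∀ v, 0 ≤ x v) ∧ ∀ u v, G.Adj u v → 1 ≤ x u + x v

/-- Optimality for the LP relaxation of vertex cover on `G`: feasible and of
minimum total value among feasible solutions. -/
def LPOptimal {V : Type*} [Fintype V] (G : SimpleGraph V) (x : V → ℝ) : Prop :=
  LPFeasible G x ∧ ∀ y, LPFeasible G y → ∑ v, x v ≤ ∑ v, y v

open Finset

/-- Key counting lemma: at an optimal LP solution, for every value `t ∈ (1/2, 1)`,
there are at least as many vertices of value `1 - t` as of value `t`. -/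
lemma fiber_card_le {V : Type*} [Fintype V] (G : SimpleGraph V) (β : V → ℝ)
    (hβ : LPOptimal G β) {t : ℝ} (ht1 : 1/2 < t) (ht2 : t < 1) :
    (Finset.univ.filter fun v => β v = t).card ≤
      (Finset.univ.filter fun v => β v = 1 - t).card := by
  classical
  obtain ⟨⟨hnn, hcov⟩, hopt⟩ := hβ
  set E' : Finset (V × V) := Finset.univ.filter
      (fun p => G.Adj p.1 p.2 ∧ 1 < β p.1 + β p.2) with hE'
  set S : Finset ℝ := insert (t - 1/2) (E'.image fun p => β p.1 + β p.2 - 1) with hS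
  have hSne : S.Nonempty := insert_nonempty _ _
  set ε := S.min' hSne with hε
  have hεpos : 0 < ε := by
    rw [hε]
    apply (Finset.lt_min'_iff S hSne).2
    intro b hb
    rw [hS, mem_insert] at hb
    rcases hb with rfl | hb
    · linarith
    · obtain ⟨p, hp, rfl⟩ := mem_image.1 hb
      rw [hE', mem_filter] at hp
      linarith [hp.2.2]
  have hεt : ε ≤ t - 1/2 := Finset.min'_le _ _ (mem_insert_self _ _)
  have hεe : ∀ u v, G.Adj u v → 1 < β u + β v → ε ≤ β u + β v - 1 := by
    intro u v ha hs
    apply Finset.min'_le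
    rw [hS, mem_insert]
    exact Or.inr (mem_image.2 ⟨(u, v), by simp [hE', ha, hs], rfl⟩)
  have htne : (1 : ℝ) - t ≠ t := by intro h; linarith
  set y : V → ℝ := fun v => if β v = t then β v - ε
      else if β v = 1 - t then β v + ε else β v with hy
  have hyfeas : LPFeasible G y := by
    constructor
    · intro v
      simp only [hy]
      split_ifs with h1 h2
      · linarith
      · linarith [hnn v]
      · exact hnn v
    · intro u v hadj
      have h1 := hcov u v hadj
      by_cases hu1 : β u = t
      · by_cases hv1 : β v = t
        · simp only [hy, if_pos hu1, if_pos hv1]; linarith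
        · by_cases hv2 : β v = 1 - t
          · simp only [hy, if_pos hu1, if_neg hv1, if_pos hv2]; linarith
          · have hslack : 1 < β u + β v := by
              rcases lt_or_eq_of_le h1 with h | h
              · exact h
              · exact absurd (by linarith : β v = 1 - t) hv2
            have h2 := hεe u v hadj hslack
            simp only [hy, if_pos hu1, if_neg hv1, if_neg hv2]; linarith
      · by_cases hv1 : β v = t
        · by_cases hu2 : β u = 1 - t
          · simp only [hy, if_neg hu1, if_pos hu2, if_pos hv1]; linarith
          · have hslack : 1 < β u + β v := by
              rcases lt_or_eq_of_le h1 with h | h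
              · exact h
              · exact absurd (by linarith : β u = 1 - t) hu2
            have h2 := hεe u v hadj hslack
            simp only [hy, if_neg hu1, if_neg hu2, if_pos hv1]; linarith
        · by_cases hu2 : β u = 1 - t <;> by_cases hv2 : β v = 1 - t <;>
            simp only [hy, if_neg hu1, if_neg hv1] <;> split_ifs <;> linarith
  set P := Finset.univ.filter fun v => β v = t with hP
  set Q := Finset.univ.filter fun v => β v = 1 - t with hQ
  have hsum : ∑ v, (y v - β v) = ε * Q.card - ε * P.card := by
    rw [← Finset.sum_filter_add_sum_filter_not Finset.univ (fun v => β v = t)]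
    have h1 : ∑ v ∈ P, (y v - β v) = -(ε * P.card) := by
      have hconst : ∀ v ∈ P, y v - β v = -ε := by
        intro v hv
        have hv' : β v = t := (mem_filter.1 hv).2
        simp [hy, hv']
      rw [Finset.sum_congr rfl hconst, Finset.sum_const, nsmul_eq_mul]
      ring
    have h2 : ∑ v ∈ Finset.univ.filter (fun v => ¬ β v = t), (y v - β v)
        = ε * Q.card := by
      rw [← Finset.sum_filter_add_sum_filter_not
        (Finset.univ.filter (fun v => ¬ β v = t)) (fun v => β v = 1 - t)]
      have e1 : (Finset.univ.filter (fun v => ¬ β v = t)).filter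
          (fun v => β v = 1 - t) = Q := by
        rw [Finset.filter_filter, hQ]
        apply Finset.filter_congr
        intro v _
        constructor
        · rintro ⟨_, h⟩; exact h
        · intro h; exact ⟨by rw [h]; exact htne, h⟩
      rw [e1]
      have h3 : ∑ v ∈ Q, (y v - β v) = ε * Q.card := by
        have hconst : ∀ v ∈ Q, y v - β v = ε := by
          intro v hv
          have hv' : β v = 1 - t := (mem_filter.1 hv).2
          have hv'' : ¬ β v = t := by rw [hv']; exact htne
          simp [hy, hv', hv'', htne]
        rw [Finset.sum_congr rfl hconst, Finset.sum_const, nsmul_eq_mul]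
        ring
      have h4 : ∑ v ∈ (Finset.univ.filter (fun v => ¬ β v = t)).filter
          (fun v => ¬ β v = 1 - t), (y v - β v) = 0 := by
        apply Finset.sum_eq_zero
        intro v hv
        rw [Finset.mem_filter] at hv
        have hv2 := hv.2
        have hv1 := (Finset.mem_filter.1 hv.1).2
        simp [hy, hv1, hv2]
      rw [h3, h4]; ring
    rw [h1, h2]; ring
  have hle := hopt y hyfeas
  have h0 : (0:ℝ) ≤ ε * Q.card - ε * P.card := by
    have : ∑ v, (y v - β v) = ∑ v, y v - ∑ v, β v := Finset.sum_sub_distrib _ _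
    rw [this] at hsum
    linarith
  by_contra hcon
  push_neg at hcon
  have : (Q.card : ℝ) < P.card := by exact_mod_cast hcon
  nlinarith [mul_pos hεpos (sub_pos.2 this)]

/-- On a bipartite graph, rounding an optimal LP vertex cover solution to values
`0`, `1/2`, `1` yields a feasible and optimal solution. -/
theorem stmt3 {V : Type*} [Fintype V] (G : SimpleGraph V) (hbip : G.Colorable 2)
    (β : V → ℝ) (hβ : LPOptimal G β) :
    LPFeasible G (fun v => if β v < 1/2 then 0 else if β v = 1/2 then 1/2 else 1) ∧
      LPOptimal G (fun v => if β v < 1/2 then 0 else if β v = 1/2 then 1/2 else 1) := by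
  classical
  obtain ⟨⟨hnn, hcov⟩, hopt⟩ := hβ
  have hβ' : LPOptimal G β := ⟨⟨hnn, hcov⟩, hopt⟩
  set r : ℝ → ℝ := fun x => if x < 1/2 then 0 else if x = 1/2 then 1/2 else 1 with hr
  have hfeas : LPFeasible G (fun v => r (β v)) := by
    constructor
    · intro v
      simp only [hr]
      split_ifs <;> norm_num
    · intro u v hadj
      have h1 := hcov u v hadj
      simp only [hr]
      split_ifs <;> linarith
  -- the sum of the rounded solution is at most the sum of β
  have hround : ∑ v, r (β v) ≤ ∑ v, β v := by
    have key : ∑ v, (r (β v) - β v) ≤ 0 := by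
      have hcomp : ∑ v, (r (β v) - β v)
          = ∑ b ∈ Finset.univ.image β,
              ((Finset.univ.filter fun v => β v = b).card : ℝ) * (r b - b) := by
        rw [Finset.sum_comp (fun x => r x - x) β]
        exact Finset.sum_congr rfl (fun b _ => by rw [nsmul_eq_mul])
      rw [hcomp]
      set T := Finset.univ.image β with hT
      set c : ℝ → ℝ := fun b =>
        ((Finset.univ.filter fun v => β v = b).card : ℝ) * (r b - b) with hc
      show ∑ b ∈ T, c b ≤ 0
      have hTnn : ∀ b ∈ T, 0 ≤ b := by
        intro b hb
        obtain ⟨v, _, rfl⟩ := Finset.mem_image.1 hb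
        exact hnn v
      rw [← Finset.sum_filter_add_sum_filter_not T (fun b => 1/2 < b)]
      -- the low part
      have hlow : ∑ b ∈ T.filter (fun b => ¬ 1/2 < b), c b
          = ∑ b ∈ T.filter (fun b => b < 1/2), c b := by
        rw [← Finset.sum_filter_of_ne (s := T.filter (fun b => ¬ 1/2 < b))
          (p := fun b => b < 1/2) (f := c) ?_, Finset.filter_filter]
        · apply Finset.sum_congr ?_ (fun _ _ => rfl)
          apply Finset.filter_congr
          intro b _
          constructor
          · rintro ⟨_, h⟩; exact h
          · intro h; exact ⟨by linarith, h⟩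
        · intro b hb hcb
          have hb2 : ¬ 1/2 < b := (Finset.mem_filter.1 hb).2
          rcases lt_or_eq_of_le (not_lt.1 hb2) with h | h
          · exact h
          · exfalso; apply hcb
            have hrb : r b = 1/2 := by simp [hr, h]
            simp only [hc]
            rw [hrb, h]
            ring
      rw [hlow]
      -- the high part is bounded using fiber_card_le
      set d : ℝ → ℝ := fun b => if b < 1 then
          ((Finset.univ.filter fun v => β v = 1 - b).card : ℝ) * (1 - b) else 0 with hd
      have hhigh : ∑ b ∈ T.filter (fun b => 1/2 < b), c b
          ≤ ∑ b ∈ T.filter (fun b => 1/2 < b), d b := by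
        apply Finset.sum_le_sum
        intro b hb
        have hb2 : 1/2 < b := (Finset.mem_filter.1 hb).2
        have hrb : r b = 1 := by
          simp only [hr]
          rw [if_neg (by linarith), if_neg (by intro h; linarith)]
        simp only [hc, hd]
        rw [hrb]
        by_cases hb3 : b < 1
        · rw [if_pos hb3]
          have := fiber_card_le G β hβ' hb2 hb3
          have hcast : ((Finset.univ.filter fun v => β v = b).card : ℝ)
              ≤ ((Finset.univ.filter fun v => β v = 1 - b).card : ℝ) := by
            exact_mod_cast this
          nlinarith
        · rw [if_neg hb3]
          have h1 : (1:ℝ) - b ≤ 0 := by linarith [not_lt.1 hb3]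
          have h2 : (0:ℝ) ≤ ((Finset.univ.filter fun v => β v = b).card : ℝ) :=
            Nat.cast_nonneg _
          nlinarith
      -- rewrite the d-sum as a sum over mirrored values
      set h : ℝ → ℝ := fun s =>
        ((Finset.univ.filter fun v => β v = s).card : ℝ) * s with hh
      have hdsum : ∑ b ∈ T.filter (fun b => 1/2 < b), d b
          ≤ ∑ s ∈ T.filter (fun s => s < 1/2), h s := by
        have e1 : ∑ b ∈ T.filter (fun b => 1/2 < b), d b
            = ∑ b ∈ (T.filter (fun b => 1/2 < b)).filter (fun b => b < 1), d b := by
          refine (Finset.sum_filter_of_ne ?_).symm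
          intro b _ hdb
          by_contra hb3
          apply hdb
          simp only [hd]
          rw [if_neg hb3]
        rw [e1]
        have e2 : ∑ b ∈ (T.filter (fun b => 1/2 < b)).filter (fun b => b < 1), d b
            = ∑ b ∈ (T.filter (fun b => 1/2 < b)).filter (fun b => b < 1), h (1-b) := by
          apply Finset.sum_congr rfl
          intro b hb
          have hb3 : b < 1 := (Finset.mem_filter.1 hb).2
          simp only [hd, hh]
          rw [if_pos hb3]
        rw [e2]
        have e3 : ∑ b ∈ (T.filter (fun b => 1/2 < b)).filter (fun b => b < 1), h (1-b)
            = ∑ s ∈ ((T.filter (fun b => 1/2 < b)).filter (fun b => b < 1)).image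
                (fun b => 1 - b), h s := by
          rw [Finset.sum_image]
          intro x _ y _ hxy
          linarith
        rw [e3]
        set I := ((T.filter (fun b => 1/2 < b)).filter (fun b => b < 1)).image
            (fun b => 1 - b) with hI
        have hIs : ∀ s ∈ I, 0 < s ∧ s < 1/2 := by
          intro s hs
          obtain ⟨b, hb, rfl⟩ := Finset.mem_image.1 hs
          have hb1 : 1/2 < b := (Finset.mem_filter.1 (Finset.mem_filter.1 hb).1).2
          have hb2 : b < 1 := (Finset.mem_filter.1 hb).2
          constructor <;> linarith
        have e4 : ∑ s ∈ I, h s = ∑ s ∈ I.filter (fun s => s ∈ T.filter (fun x => x < 1/2)), h s := by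
          rw [Finset.sum_filter_of_ne]
          intro s hs hhs
          have hcard : (Finset.univ.filter fun v => β v = s).Nonempty := by
            rw [Finset.nonempty_iff_ne_empty]
            intro hemp
            apply hhs
            simp [hh, hemp]
          obtain ⟨v, hv⟩ := hcard
          have hv' : β v = s := (Finset.mem_filter.1 hv).2
          rw [Finset.mem_filter, hT]
          exact ⟨Finset.mem_image.2 ⟨v, Finset.mem_univ v, hv'⟩, (hIs s hs).2⟩
        rw [e4]
        apply Finset.sum_le_sum_of_subset_of_nonneg
        · intro s hs
          exact (Finset.mem_filter.1 hs).2
        · intro s hs _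
          have hs1 : s < 1/2 := (Finset.mem_filter.1 hs).2
          have hs0 : 0 ≤ s := hTnn s (Finset.mem_filter.1 hs).1
          simp only [hh]
          positivity
      -- on the low part, c s = - h s
      have hlow2 : ∀ s ∈ T.filter (fun s => s < 1/2), c s = - h s := by
        intro s hs
        have hs1 : s < 1/2 := (Finset.mem_filter.1 hs).2
        have hrs : r s = 0 := by simp only [hr]; rw [if_pos hs1]
        simp only [hc, hh]
        rw [hrs]; ring
      calc ∑ b ∈ T.filter (fun b => 1/2 < b), c b
            + ∑ b ∈ T.filter (fun b => b < 1/2), c b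
          ≤ ∑ s ∈ T.filter (fun s => s < 1/2), h s
            + ∑ b ∈ T.filter (fun b => b < 1/2), c b := by
            linarith [le_trans hhigh hdsum]
        _ = 0 := by
            rw [Finset.sum_congr rfl hlow2, ← Finset.sum_add_distrib]
            apply Finset.sum_eq_zero
            intro s _
            ring
    have : ∑ v, (r (β v) - β v) = ∑ v, r (β v) - ∑ v, β v := Finset.sum_sub_distrib _ _
    linarith [key, this ▸ key]
  exact ⟨hfeas, hfeas, fun y hy => le_trans hround (hopt y hy)⟩
end

section
/- Let β be an optimal solution of the LP relaxation of vertex cover on G = (V,E), and let V₊ = {v : 0 < β(x_v) < 1/2} and V₋ = {v : 1/2 < β(x_v) < 1}. Then |V₊| = |V₋|. -/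
/-- For an optimal LP vertex cover solution `β`, the set of vertices with value
strictly between `0` and `1/2` has the same size as the set of vertices with
value strictly between `1/2` and `1`. -/
theorem stmt4 {V : Type*} [Fintype V] (G : SimpleGraph V)
    (β : V → ℝ) (hβ : LPOptimal G β) :
    {v | 0 < β v ∧ β v < 1/2}.ncard = {v | 1/2 < β v ∧ β v < 1}.ncard := by
  classical
  obtain ⟨⟨hpos, hedge⟩, hopt⟩ := hβ
  set A : Finset V := Finset.univ.filter (fun v => 0 < β v ∧ β v < 1/2) with hA
  set B : Finset V := Finset.univ.filter (fun v => 1/2 < β v ∧ β v < 1) with hB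
  have hAmem : ∀ v, v ∈ A ↔ (0 < β v ∧ β v < 1/2) := by
    intro v; simp [hA]
  have hBmem : ∀ v, v ∈ B ↔ (1/2 < β v ∧ β v < 1) := by
    intro v; simp [hB]
  have hAset : {v | 0 < β v ∧ β v < 1/2} = (↑A : Set V) := by
    ext v; simp [hAmem]
  have hBset : {v | 1/2 < β v ∧ β v < 1} = (↑B : Set V) := by
    ext v; simp [hBmem]
  rw [hAset, hBset, Set.ncard_coe_finset, Set.ncard_coe_finset]
  -- choose ε
  set S : Finset ℝ := insert 1 ((A.image β) ∪ (B.image (fun v => β v - 1/2))) with hS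
  have hSne : S.Nonempty := ⟨1, Finset.mem_insert_self _ _⟩
  set ε : ℝ := S.min' hSne with hε
  have hεpos : 0 < ε := by
    rw [hε, Finset.lt_min'_iff]
    intro b hb
    rw [hS] at hb
    rcases Finset.mem_insert.mp hb with h | h
    · simp [h]
    · rcases Finset.mem_union.mp h with h | h
      · obtain ⟨v, hv, rfl⟩ := Finset.mem_image.mp h
        exact ((hAmem v).mp hv).1
      · obtain ⟨v, hv, rfl⟩ := Finset.mem_image.mp h
        have := ((hBmem v).mp hv).1; linarith
  have hεA : ∀ v ∈ A, ε ≤ β v := by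
    intro v hv
    exact Finset.min'_le _ _ (Finset.mem_insert_of_mem
      (Finset.mem_union_left _ (Finset.mem_image_of_mem β hv)))
  have hεB : ∀ v ∈ B, ε ≤ β v - 1/2 := by
    intro v hv
    exact Finset.min'_le _ _ (Finset.mem_insert_of_mem
      (Finset.mem_union_right _ (Finset.mem_image_of_mem _ hv)))
  have hAB : ∀ v, v ∈ A → v ∈ B → False := by
    intro v h1 h2
    have := ((hAmem v).mp h1).2
    have := ((hBmem v).mp h2).1
    linarith
  -- the two perturbations
  set y1 : V → ℝ := fun v => β v + (if v ∈ A then ε else 0) - (if v ∈ B then ε else 0) with hy1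
  set y2 : V → ℝ := fun v => β v - (if v ∈ A then ε else 0) + (if v ∈ B then ε else 0) with hy2
  -- basic case facts for vertices not in A ∪ B
  have hout : ∀ v, v ∉ A → v ∉ B → β v = 0 ∨ β v = 1/2 ∨ 1 ≤ β v := by
    intro v hvA hvB
    rw [hAmem] at hvA; rw [hBmem] at hvB
    push_neg at hvA hvB
    have h0 := hpos v
    rcases lt_or_ge 0 (β v) with h | h
    · have h1 := hvA h
      rcases lt_or_ge (1/2) (β v) with h2 | h2
      · right; right; exact hvB h2
      · right; left; linarith
    · left; linarith
  have hfeas1 : LPFeasible G y1 := by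
    constructor
    · intro v
      by_cases hvA : v ∈ A <;> by_cases hvB : v ∈ B
      · exact absurd hvB (fun h => hAB v hvA h)
      · have := ((hAmem v).mp hvA).1; simp [hy1, hvA, hvB]; linarith
      · have := hεB v hvB; simp [hy1, hvA, hvB]; linarith
      · have := hpos v; simp [hy1, hvA, hvB]; linarith
    · intro u v huv
      have hc := hedge u v huv
      by_cases huB : u ∈ B <;> by_cases hvB : v ∈ B
      · have h1 := hεB u huB; have h2 := hεB v hvB
        have huA : u ∉ A := fun h => hAB u h huB
        have hvA : v ∉ A := fun h => hAB v h hvB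
        simp [hy1, huA, hvA, huB, hvB]; linarith
      · -- u ∈ B, v ∉ B
        have huA : u ∉ A := fun h => hAB u h huB
        by_cases hvA : v ∈ A
        · simp [hy1, huA, hvA, huB, hvB]; linarith
        · have h1 := hεB u huB
          have hu1 := ((hBmem u).mp huB).2
          rcases hout v hvA hvB with h | h | h
          · exfalso; rw [h] at hc; linarith
          · simp [hy1, huA, hvA, huB, hvB]; linarith
          · simp [hy1, huA, hvA, huB, hvB]; linarith
      · -- v ∈ B, u ∉ B : symmetric
        have hvA : v ∉ A := fun h => hAB v h hvB
        by_cases huA : u ∈ A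
        · simp [hy1, huA, hvA, huB, hvB]; linarith
        · have h1 := hεB v hvB
          have hv1 := ((hBmem v).mp hvB).2
          rcases hout u huA huB with h | h | h
          · exfalso; rw [h] at hc; linarith
          · simp [hy1, huA, hvA, huB, hvB]; linarith
          · simp [hy1, huA, hvA, huB, hvB]; linarith
      · by_cases huA : u ∈ A <;> by_cases hvA : v ∈ A <;>
          simp [hy1, huA, hvA, huB, hvB] <;> linarith
  have hfeas2 : LPFeasible G y2 := by
    constructor
    · intro v
      by_cases hvA : v ∈ A <;> by_cases hvB : v ∈ B
      · exact absurd hvB (fun h => hAB v hvA h)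
      · have := hεA v hvA; simp [hy2, hvA, hvB]; linarith
      · have := hpos v; simp [hy2, hvA, hvB]; linarith
      · have := hpos v; simp [hy2, hvA, hvB]; linarith
    · intro u v huv
      have hc := hedge u v huv
      by_cases huA : u ∈ A <;> by_cases hvA : v ∈ A
      · have h1 := ((hAmem u).mp huA).2; have h2 := ((hAmem v).mp hvA).2
        exfalso; linarith
      · have huB : u ∉ B := fun h => hAB u huA h
        have h1 := hεA u huA
        have hu1 := ((hAmem u).mp huA).2
        by_cases hvB : v ∈ B
        · simp [hy2, huA, hvA, huB, hvB]; linarith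
        · rcases hout v hvA hvB with h | h | h
          · exfalso; rw [h] at hc; linarith
          · exfalso; linarith
          · simp [hy2, huA, hvA, huB, hvB]; linarith
      · have hvB : v ∉ B := fun h => hAB v hvA h
        have h1 := hεA v hvA
        have hv1 := ((hAmem v).mp hvA).2
        by_cases huB : u ∈ B
        · simp [hy2, huA, hvA, huB, hvB]; linarith
        · rcases hout u huA huB with h | h | h
          · exfalso; rw [h] at hc; linarith
          · exfalso; linarith
          · simp [hy2, huA, hvA, huB, hvB]; linarith
      · by_cases huB : u ∈ B <;> by_cases hvB : v ∈ B <;>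
          simp [hy2, huA, hvA, huB, hvB] <;> linarith
  -- sums
  have hsumif : ∀ (C : Finset V), ∑ v, (if v ∈ C then ε else 0) = C.card * ε := by
    intro C
    rw [Finset.sum_ite_mem, Finset.univ_inter, Finset.sum_const, nsmul_eq_mul]
  have hsum1 : ∑ v, y1 v = ∑ v, β v + A.card * ε - B.card * ε := by
    simp only [hy1, Finset.sum_sub_distrib, Finset.sum_add_distrib, hsumif]
  have hsum2 : ∑ v, y2 v = ∑ v, β v - A.card * ε + B.card * ε := by
    simp only [hy2, Finset.sum_add_distrib, Finset.sum_sub_distrib, hsumif]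
  have h1 := hopt y1 hfeas1
  have h2 := hopt y2 hfeas2
  rw [hsum1] at h1
  rw [hsum2] at h2
  have hle1 : (B.card : ℝ) * ε ≤ A.card * ε := by linarith
  have hle2 : (A.card : ℝ) * ε ≤ B.card * ε := by linarith
  have : (A.card : ℝ) = B.card := by
    have := mul_le_mul_iff_of_pos_right hεpos |>.mp hle1
    have := mul_le_mul_iff_of_pos_right hεpos |>.mp hle2
    linarith
  exact_mod_cast this
end

section
/- Let G = (V,E) be a graph, let β be an optimal solution of the vertex cover LP relaxation on G, and let G' be the induced subgraph of G on the vertices v with β(x_v) = 1/2 (assume β is half-integral, taking values in {0, 1/2, 1}). Then the restriction of β to V(G') is an optimal solution of the vertex cover LP relaxation on G'. -/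
/-- If `β` is a half-integral optimal solution of the vertex cover LP relaxation
on `G`, then its restriction to the induced subgraph `G'` on the vertices of
value `1/2` is an optimal solution of the LP relaxation on `G'`. -/
theorem stmt6 {V : Type*} [Fintype V] (G : SimpleGraph V) (β : V → ℝ)
    (hhalf : ∀ v, β v = 0 ∨ β v = 1/2 ∨ β v = 1)
    (hopt : LPOptimal G β) :
    LPOptimal (G.induce {v | β v = 1/2}) (fun v => β ↑v) := by
  classical
  obtain ⟨⟨hnn, hedge⟩, hmin⟩ := hopt
  constructor
  · constructor
    · intro v; exact hnn v
    · rintro ⟨u, hu⟩ ⟨v, hv⟩ hadj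
      simp only [Set.mem_setOf_eq] at hu hv
      show 1 ≤ β u + β v
      rw [hu, hv]; norm_num
  · intro y hy
    -- extend y to all of V
    set y' : V → ℝ := fun v => if h : β v = 1/2 then y ⟨v, h⟩ else β v with hy'
    have hy'feas : LPFeasible G y' := by
      constructor
      · intro v
        by_cases h : β v = 1/2
        · simp only [hy', dif_pos h]; exact hy.1 ⟨v, h⟩
        · simp only [hy', dif_neg h]; exact hnn v
      · intro u v huv
        by_cases hu : β u = 1/2
        · by_cases hv : β v = 1/2
          · have := hy.2 ⟨u, hu⟩ ⟨v, hv⟩ (by simpa using huv)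
            simpa only [hy', dif_pos hu, dif_pos hv] using this
          · rcases hhalf v with h0 | h12 | h1
            · exfalso
              have := hedge u v huv
              rw [hu, h0] at this; linarith
            · exact absurd h12 hv
            · have hyu : 0 ≤ y' u := by
                simp only [hy', dif_pos hu]; exact hy.1 ⟨u, hu⟩
              simp only [hy', dif_neg hv, h1]; linarith
        · rcases hhalf u with h0 | h12 | h1
          · -- β u = 0, so β v must be 1
            rcases hhalf v with hv0 | hv12 | hv1
            · exfalso; have := hedge u v huv; rw [h0, hv0] at this; linarith
            · exfalso; have := hedge u v huv; rw [h0, hv12] at this; linarith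
            · have hv : ¬ β v = 1/2 := by rw [hv1]; norm_num
              have hyu : 0 ≤ y' u := by simp only [hy', dif_neg hu]; exact hnn u
              simp only [hy', dif_neg hv, hv1]; linarith
          · exact absurd h12 hu
          · have hyv : 0 ≤ y' v := by
              by_cases hv : β v = 1/2
              · simp only [hy', dif_pos hv]; exact hy.1 ⟨v, hv⟩
              · simp only [hy', dif_neg hv]; exact hnn v
            simp only [hy', dif_neg hu, h1]; linarith
    have htot : ∑ v, β v ≤ ∑ v, y' v := hmin y' hy'feas
    -- split sums
    have hsplitβ := Finset.sum_filter_add_sum_filter_not Finset.univ (fun v => β v = 1/2) β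
    have hsplity := Finset.sum_filter_add_sum_filter_not Finset.univ (fun v => β v = 1/2) y'
    have hoff : ∑ v ∈ Finset.univ.filter (fun v => ¬ β v = 1/2), y' v
        = ∑ v ∈ Finset.univ.filter (fun v => ¬ β v = 1/2), β v := by
      apply Finset.sum_congr rfl
      intro v hv
      simp only [Finset.mem_filter] at hv
      simp only [hy', dif_neg hv.2]
    have hsubβ : ∑ v ∈ Finset.univ.filter (fun v => β v = 1/2), β v
        = ∑ v : {v | β v = 1/2}, β ↑v := by
      rw [← Finset.sum_subtype (Finset.univ.filter (fun v => β v = 1/2))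
        (fun v => by simp [Set.mem_setOf_eq]) β]
    have h1 : ∑ v : {v | β v = 1/2}, y v = ∑ v : {v | β v = 1/2}, y' ↑v := by
      apply Finset.sum_congr rfl
      rintro ⟨v, hv⟩ _
      have hv' : β v = 1/2 := hv
      show y ⟨v, hv⟩ = dite (β v = 1/2) (fun h => y ⟨v, h⟩) (fun _ => β v)
      rw [dif_pos hv']
    have hsuby : ∑ v ∈ Finset.univ.filter (fun v => β v = 1/2), y' v
        = ∑ v : {v | β v = 1/2}, y v := by
      rw [h1]
      exact Finset.sum_subtype (p := (· ∈ {v | β v = 1/2})) _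
        (fun v => by simp [Set.mem_setOf_eq]) y'
    rw [← hsplitβ, ← hsplity, hoff, hsubβ, hsuby] at htot
    linarith
end

section
/- Let G = (V,E) be a graph, k ∈ ℕ, and construct G' by adding a new vertex s adjacent to every vertex of V. Then G has a matching of size k if and only if G' contains k cycles through s that pairwise share only the vertex s. -/
/-- A matching of a simple graph, given as a finite set of pairwise disjoint edges. -/
def IsMatching {V : Type*} (G : SimpleGraph V) (M : Finset (Sym2 V)) : Prop :=
  (∀ e ∈ M, e ∈ G.edgeSet) ∧
    ∀ e ∈ M, ∀ f ∈ M, e ≠ f → ∀ v, v ∈ e → v ∉ f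

/-- The graph `G'` obtained from `G` by adding a new vertex `s` (modelled by
`none : Option V`) adjacent to every vertex of `G`. -/
def addApex {V : Type*} (G : SimpleGraph V) : SimpleGraph (Option V) :=
  SimpleGraph.fromRel fun a b =>
    a = none ∨ ∃ u v, a = some u ∧ b = some v ∧ G.Adj u v

open SimpleGraph


lemma addApex_adj_some {V : Type*} {G : SimpleGraph V} {u v : V} :
    (addApex G).Adj (some u) (some v) ↔ G.Adj u v := by
  simp only [addApex, fromRel_adj]
  constructor
  · rintro ⟨hne, h | h⟩ <;> rcases h with h | ⟨a, b, ha, hb, hab⟩ <;> simp_all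
    exact hab.symm
  · intro h
    exact ⟨by simpa using h.ne, Or.inl (Or.inr ⟨u, v, rfl, rfl, h⟩)⟩

lemma addApex_adj_none {V : Type*} {G : SimpleGraph V} {u : V} :
    (addApex G).Adj none (some u) := by
  simp [addApex, fromRel_adj]

lemma cycle_exists_edge {V : Type*} {G : SimpleGraph V} {p : (addApex G).Walk none none}
    (hp : p.IsCycle) :
    ∃ u v, G.Adj u v ∧ some u ∈ p.support ∧ some v ∈ p.support := by
  obtain ⟨a, h, q, rfl⟩ := Walk.not_nil_iff.mp hp.not_nil
  rw [Walk.cons_isCycle_iff] at hp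
  obtain ⟨u, rfl⟩ := Option.ne_none_iff_exists.mp h.ne'
  obtain ⟨b, h', r, rfl⟩ := Walk.exists_eq_cons_of_ne (by simp) q
  have hb : b ≠ none := by
    rintro rfl
    exact hp.2 (by simp [Sym2.eq_swap])
  obtain ⟨v, rfl⟩ := Option.ne_none_iff_exists.mp hb
  exact ⟨u, v, addApex_adj_some.mp h', by simp, by simp⟩

def tri {V : Type*} {G : SimpleGraph V} {u v : V} (h : G.Adj u v) :
    (addApex G).Walk none none :=
  Walk.cons addApex_adj_none
    (Walk.cons (addApex_adj_some.mpr h) (Walk.cons addApex_adj_none.symm Walk.nil))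

lemma tri_support {V : Type*} {G : SimpleGraph V} {u v : V} (h : G.Adj u v) :
    (tri h).support = [none, some u, some v, none] := rfl

lemma tri_isCycle {V : Type*} {G : SimpleGraph V} {u v : V} (h : G.Adj u v) :
    (tri h).IsCycle := by
  rw [tri, Walk.cons_isCycle_iff]
  constructor
  · rw [Walk.isPath_def]
    simp [h.ne]
  · simp [Sym2.eq_iff, h.ne]

/-- `G` has a matching of size `k` if and only if the graph `G'` obtained by adding
a universal vertex `s` contains `k` cycles through `s` that pairwise share only `s`. -/
theorem stmt7 {V : Type*} [Fintype V] [DecidableEq V] (G : SimpleGraph V) (k : ℕ) :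
    (∃ M : Finset (Sym2 V), IsMatching G M ∧ M.card = k) ↔
      ∃ C : Fin k → (addApex G).Walk none none,
        (∀ i, (C i).IsCycle) ∧
          ∀ i j, i ≠ j → ∀ x, x ∈ (C i).support → x ∈ (C j).support → x = none := by
  constructor
  · rintro ⟨M, ⟨hM1, hM2⟩, hcard⟩
    set g : Fin k → Sym2 V := fun i => (M.equivFin.symm (Fin.cast hcard.symm i)).1 with hg
    have hgmem : ∀ i, g i ∈ M := fun i => (M.equivFin.symm (Fin.cast hcard.symm i)).2
    have hginj : Function.Injective g := by
      intro i j hij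
      have h2 := M.equivFin.symm.injective (Subtype.ext hij)
      exact Fin.ext (by simpa using congrArg Fin.val h2)
    have hex : ∀ i : Fin k, ∃ a b, G.Adj a b ∧ g i = s(a, b) := by
      intro i
      obtain ⟨⟨a, b⟩, hab⟩ := Quot.exists_rep (g i)
      have hmem := hM1 _ (hgmem i)
      rw [← hab] at hmem
      exact ⟨a, b, hmem, hab.symm⟩
    choose u v huv hs using hex
    refine ⟨fun i => tri (huv i), fun i => tri_isCycle _, ?_⟩
    intro i j hij x hxi hxj
    rw [tri_support] at hxi hxj
    simp only [List.mem_cons, List.not_mem_nil, or_false] at hxi hxj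
    by_contra hxn
    have hmem : ∀ l : Fin k, (x = some (u l) ∨ x = some (v l)) →
        ∃ w, x = some w ∧ w ∈ g l := by
      rintro l (rfl | rfl)
      · exact ⟨u l, rfl, by rw [hs]; simp⟩
      · exact ⟨v l, rfl, by rw [hs]; simp⟩
    obtain ⟨w, rfl, hwi⟩ := hmem i (by tauto)
    obtain ⟨w', hw', hwj⟩ := hmem j (by tauto)
    obtain rfl : w = w' := by injection hw'
    exact hM2 _ (hgmem i) _ (hgmem j) (fun h => hij (hginj h)) w hwi hwj
  · rintro ⟨C, hcyc, hdisj⟩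
    choose u v huv hu hv using fun i => cycle_exists_edge (hcyc i)
    have key : ∀ i j : Fin k, ∀ w, w ∈ s(u i, v i) → some w ∈ (C j).support → i = j := by
      intro i j w hw hwj
      by_contra hij
      have hwi : some w ∈ (C i).support := by
        rcases Sym2.mem_iff.mp hw with rfl | rfl
        · exact hu i
        · exact hv i
      exact Option.some_ne_none w (hdisj i j hij _ hwi hwj)
    have hinj : Function.Injective fun i => s(u i, v i) := by
      intro i j hij
      simp only [] at hij
      have hm : u i ∈ s(u j, v j) := by rw [← hij]; simp
      have hsup : some (u i) ∈ (C j).support := by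
        rcases Sym2.mem_iff.mp hm with h | h
        · rw [h]; exact hu j
        · rw [h]; exact hv j
      exact key i j (u i) (by simp) hsup
    refine ⟨Finset.image (fun i => s(u i, v i)) Finset.univ, ⟨?_, ?_⟩, ?_⟩
    · intro e he
      simp only [Finset.mem_image, Finset.mem_univ, true_and] at he
      obtain ⟨i, rfl⟩ := he
      exact (huv i)
    · intro e he f hf hef w hwe hwf
      simp only [Finset.mem_image, Finset.mem_univ, true_and] at he hf
      obtain ⟨i, rfl⟩ := he
      obtain ⟨j, rfl⟩ := hf
      have hij : i ≠ j := fun h => hef (by rw [h])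
      have hsj : some w ∈ (C j).support := by
        rcases Sym2.mem_iff.mp hwf with h | h
        · rw [h]; exact hu j
        · rw [h]; exact hv j
      exact hij (key i j w hwe hsj)
    · rw [Finset.card_image_of_injective _ hinj, Finset.card_univ, Fintype.card_fin]
end

section
/- Let G = (V,E) be a graph with vertex cover S, and suppose that for every pair of distinct non-adjacent vertices u, v ∈ S, the number of common neighbors of u and v in V \ S is at most k, where k ≤ |S|. Suppose further that every vertex in V \ S that is simplicial in G has been removed, i.e., no vertex of V \ S is simplicial. Then |V| ≤ |S| + |S|²·k ≤ |S| + |S|³. -/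
/-- A vertex `v` of `G` is simplicial if its neighborhood induces a clique. -/
def Simplicial {V : Type*} [Fintype V] (G : SimpleGraph V) [DecidableRel G.Adj]
    (v : V) : Prop :=
  ∀ a ∈ G.neighborFinset v, ∀ b ∈ G.neighborFinset v, a ≠ b → G.Adj a b

/-- Size bound for the tree-width kernel: if `S` is a vertex cover, every pair of
distinct non-adjacent vertices of `S` has at most `k ≤ |S|` common neighbors
outside `S`, and no vertex outside `S` is simplicial, then
`|V| ≤ |S| + |S|²·k ≤ |S| + |S|³`. -/
theorem stmt10 {V : Type*} [Fintype V] [DecidableEq V] (G : SimpleGraph V)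
    [DecidableRel G.Adj] (k : ℕ) (S : Finset V)
    (hvc : ∀ u v, G.Adj u v → u ∈ S ∨ v ∈ S)
    (hk : k ≤ S.card)
    (hpairs : ∀ u ∈ S, ∀ v ∈ S, u ≠ v → ¬ G.Adj u v →
      ((G.neighborFinset u ∩ G.neighborFinset v) \ S).card ≤ k)
    (hnosimp : ∀ v, v ∉ S → ¬ Simplicial G v) :
    Fintype.card V ≤ S.card + S.card ^ 2 * k ∧
      S.card + S.card ^ 2 * k ≤ S.card + S.card ^ 3 := by
  constructor
  · classical
    set P := (S ×ˢ S).filter (fun p => p.1 ≠ p.2 ∧ ¬ G.Adj p.1 p.2) with hP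
    have hsub : (Finset.univ \ S) ⊆
        P.biUnion (fun p => (G.neighborFinset p.1 ∩ G.neighborFinset p.2) \ S) := by
      intro w hw
      simp only [Finset.mem_sdiff, Finset.mem_univ, true_and] at hw
      have hns := hnosimp w hw
      simp only [Simplicial, not_forall] at hns
      obtain ⟨a, ha, b, hb, hab, hnadj⟩ := hns
      rw [SimpleGraph.mem_neighborFinset] at ha hb
      have haS : a ∈ S := (hvc w a ha).resolve_left hw
      have hbS : b ∈ S := (hvc w b hb).resolve_left hw
      apply Finset.mem_biUnion.mpr
      refine ⟨(a, b), ?_, ?_⟩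
      · simp [hP, haS, hbS, hab, hnadj]
      · simp [SimpleGraph.mem_neighborFinset, ha.symm, hb.symm, hw]
    have hcard : (Finset.univ \ S).card ≤ S.card ^ 2 * k := by
      calc (Finset.univ \ S).card
          ≤ (P.biUnion (fun p => (G.neighborFinset p.1 ∩ G.neighborFinset p.2) \ S)).card :=
            Finset.card_le_card hsub
        _ ≤ ∑ p ∈ P, ((G.neighborFinset p.1 ∩ G.neighborFinset p.2) \ S).card :=
            Finset.card_biUnion_le
        _ ≤ ∑ _p ∈ P, k := by
            apply Finset.sum_le_sum
            intro p hp
            simp only [hP, Finset.mem_filter, Finset.mem_product] at hp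
            exact hpairs p.1 hp.1.1 p.2 hp.1.2 hp.2.1 hp.2.2
        _ = P.card * k := by rw [Finset.sum_const, smul_eq_mul]
        _ ≤ (S ×ˢ S).card * k := by
            exact Nat.mul_le_mul_right k (Finset.card_le_card (Finset.filter_subset _ _))
        _ = S.card ^ 2 * k := by rw [Finset.card_product, sq]
    have : Fintype.card V = S.card + (Finset.univ \ S).card := by
      have hle := Finset.card_le_card (Finset.subset_univ S)
      rw [Finset.card_univ] at hle
      rw [Finset.card_sdiff_of_subset (Finset.subset_univ S), Finset.card_univ]
      omega
    omega
  · have : S.card ^ 2 * k ≤ S.card ^ 3 := by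
      calc S.card ^ 2 * k ≤ S.card ^ 2 * S.card := Nat.mul_le_mul_left _ hk
        _ = S.card ^ 3 := by ring
    omega
end

section
/- Let P be a finite set of distinct points in the plane and k ∈ ℕ. Suppose some line ℓ covers at least k+1 points of P. Then P can be covered by at most k lines if and only if P \ ℓ can be covered by at most k−1 lines (where k ≥ 1; if k = 0 then P cannot be covered by 0 lines unless P \ ℓ = ∅ and P = ∅). -/
/-- A line in the plane: a one-dimensional affine subspace of `ℝ²`. -/
def IsLine (L : AffineSubspace ℝ (ℝ × ℝ)) : Prop :=
  Module.finrank ℝ L.direction = 1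

/-- `P` can be covered by at most `k` lines. -/
def CoveredBy (P : Set (ℝ × ℝ)) (k : ℕ) : Prop :=
  ∃ L : Finset (AffineSubspace ℝ (ℝ × ℝ)), L.card ≤ k ∧ (∀ l ∈ L, IsLine l) ∧
    ∀ p ∈ P, ∃ l ∈ L, p ∈ l

/-- Two distinct lines intersect in at most one point. -/
lemma lines_inter_subsingleton {L₁ L₂ : AffineSubspace ℝ (ℝ × ℝ)}
    (h₁ : IsLine L₁) (h₂ : IsLine L₂) (hne : L₁ ≠ L₂)
    {p q : ℝ × ℝ} (hp₁ : p ∈ L₁) (hp₂ : p ∈ L₂) (hq₁ : q ∈ L₁) (hq₂ : q ∈ L₂) :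
    p = q := by
  by_contra hpq
  have hv : q -ᵥ p ≠ 0 := by
    intro h
    exact hpq (by simpa using (vsub_eq_zero_iff_eq.mp h).symm)
  have hd : ∀ (L : AffineSubspace ℝ (ℝ × ℝ)), IsLine L → p ∈ L → q ∈ L →
      L.direction = Submodule.span ℝ {q -ᵥ p} := by
    intro L hL hpL hqL
    have hle : Submodule.span ℝ {q -ᵥ p} ≤ L.direction := by
      rw [Submodule.span_le, Set.singleton_subset_iff]
      exact AffineSubspace.vsub_mem_direction hqL hpL
    have hfr : Module.finrank ℝ (Submodule.span ℝ {q -ᵥ p}) = 1 :=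
      finrank_span_singleton hv
    exact (Submodule.eq_of_le_of_finrank_le hle (by rw [hfr, hL])).symm
  exact hne (AffineSubspace.ext_of_direction_eq
    ((hd L₁ h₁ hp₁ hq₁).trans (hd L₂ h₂ hp₂ hq₂).symm) ⟨p, hp₁, hp₂⟩)

/-- Safeness of the point-line-cover reduction rule: if a line `ℓ` covers at least
`k + 1` points of `P` (with `k ≥ 1`), then `P` can be covered by at most `k` lines
if and only if the points of `P` off `ℓ` can be covered by at most `k - 1` lines. -/
theorem stmt12 (P : Finset (ℝ × ℝ)) (k : ℕ) (hk : 1 ≤ k)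
    (ℓ : AffineSubspace ℝ (ℝ × ℝ)) (hℓ : IsLine ℓ)
    (hmany : k + 1 ≤ ((↑P : Set (ℝ × ℝ)) ∩ (ℓ : Set (ℝ × ℝ))).ncard) :
    CoveredBy (↑P) k ↔ CoveredBy ((↑P : Set (ℝ × ℝ)) \ (ℓ : Set (ℝ × ℝ))) (k - 1) := by
  classical
  constructor
  · rintro ⟨L, hcard, hlines, hcov⟩
    -- first show ℓ ∈ L
    have hℓL : ℓ ∈ L := by
      by_contra hne
      set T : Finset (ℝ × ℝ) := P.filter (fun p => p ∈ ℓ) with hT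
      have hTcoe : ((↑P : Set (ℝ × ℝ)) ∩ (ℓ : Set (ℝ × ℝ))) = ↑T := by
        ext x; simp [hT]
      have hTcard : k + 1 ≤ T.card := by
        rw [hTcoe, Set.ncard_coe_finset] at hmany; exact hmany
      set f : (ℝ × ℝ) → AffineSubspace ℝ (ℝ × ℝ) := fun p =>
        if h : ∃ l ∈ L, p ∈ l then h.choose else ℓ with hf
      have hfmem : ∀ p ∈ T, f p ∈ L ∧ p ∈ f p := by
        intro p hp
        have hpP : p ∈ P := (Finset.mem_filter.mp hp).1
        have h : ∃ l ∈ L, p ∈ l := hcov p (by simpa using hpP)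
        rw [hf]
        simp only [dif_pos h]
        exact ⟨h.choose_spec.1, h.choose_spec.2⟩
      have hinj : Set.InjOn f ↑T := by
        intro p hp q hq hfeq
        have hp' := hfmem p (Finset.mem_coe.mp hp)
        have hq' := hfmem q (Finset.mem_coe.mp hq)
        have hpl : p ∈ ℓ := (Finset.mem_filter.mp (Finset.mem_coe.mp hp)).2
        have hql : q ∈ ℓ := (Finset.mem_filter.mp (Finset.mem_coe.mp hq)).2
        have hlne : f p ≠ ℓ := fun h => hne (h ▸ hp'.1)
        exact lines_inter_subsingleton (hlines _ hp'.1) hℓ hlne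
          hp'.2 hpl (hfeq ▸ hq'.2) hql
      have hle : T.card ≤ L.card :=
        Finset.card_le_card_of_injOn f (fun p hp => (hfmem p hp).1) hinj
      omega
    refine ⟨L.erase ℓ, ?_, fun l hl => hlines l (Finset.mem_of_mem_erase hl), ?_⟩
    · calc (L.erase ℓ).card = L.card - 1 := Finset.card_erase_of_mem hℓL
        _ ≤ k - 1 := Nat.sub_le_sub_right hcard 1
    · rintro p ⟨hpP, hpℓ⟩
      obtain ⟨l, hlL, hpl⟩ := hcov p hpP
      exact ⟨l, Finset.mem_erase.mpr ⟨fun h => hpℓ (h ▸ hpl), hlL⟩, hpl⟩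
  · rintro ⟨L, hcard, hlines, hcov⟩
    refine ⟨insert ℓ L, ?_, ?_, ?_⟩
    · calc (insert ℓ L).card ≤ L.card + 1 := Finset.card_insert_le _ _
        _ ≤ (k - 1) + 1 := by omega
        _ = k := by omega
    · intro l hl
      rcases Finset.mem_insert.mp hl with h | h
      · exact h ▸ hℓ
      · exact hlines l h
    · intro p hp
      by_cases hpℓ : p ∈ ℓ
      · exact ⟨ℓ, Finset.mem_insert_self _ _, hpℓ⟩
      · obtain ⟨l, hlL, hpl⟩ := hcov p ⟨hp, hpℓ⟩
        exact ⟨l, Finset.mem_insert_of_mem hlL, hpl⟩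
end

section
/- Let G be a multigraph, k ∈ ℕ, and v a vertex contained in more than k cycles that pairwise intersect only in v. Then every feedback vertex set of G of size at most k contains v. -/
/-- A multigraph on vertex type `V` with edge type `E` is given by the map `ends`
sending each edge to its (unordered) pair of endpoints. `HasCycleAvoiding ends F`
says that the multigraph contains a cycle none of whose vertices lies in `F`:
a cyclic sequence of `n + 1 ≥ 1` distinct vertices joined by `n + 1` distinct edges
(this includes self-loops, `n + 1 = 1`, and pairs of parallel edges, `n + 1 = 2`). -/
def HasCycleAvoiding {V E : Type*} (ends : E → Sym2 V) (F : Set V) : Prop :=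
  ∃ n : ℕ, ∃ (vs : Fin (n + 1) → V) (es : Fin (n + 1) → E),
    Function.Injective vs ∧ Function.Injective es ∧ (∀ i, vs i ∉ F) ∧
      ∀ i, ends (es i) = s(vs i, vs (i + 1))

/-- `F` is a feedback vertex set: deleting `F` leaves an acyclic multigraph. -/
def IsFVS {V E : Type*} (ends : E → Sym2 V) (F : Set V) : Prop :=
  ¬ HasCycleAvoiding ends F

/-- If a vertex `v` of a multigraph lies on more than `k` cycles that pairwise
intersect only in `v` (a flower of order `k + 1`), then every feedback vertex
set of size at most `k` contains `v`. -/
theorem stmt15 {V E : Type*} [DecidableEq V] (ends : E → Sym2 V) (v : V) (k : ℕ)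
    (hflower : ∃ (n : Fin (k + 1) → ℕ)
        (vs : ∀ j, Fin (n j + 1) → V) (es : ∀ j, Fin (n j + 1) → E),
      (∀ j, Function.Injective (vs j)) ∧ (∀ j, Function.Injective (es j)) ∧
        (∀ j i, ends (es j i) = s(vs j i, vs j (i + 1))) ∧
        (∀ j, ∃ i, vs j i = v) ∧
        ∀ j j', j ≠ j' → ∀ i i', vs j i = vs j' i' → vs j i = v) :
    ∀ F : Finset V, F.card ≤ k → IsFVS ends ↑F → v ∈ F := by
  intro F hcard hFVS
  by_contra hv
  obtain ⟨n, vs, es, hinj, heinj, hends, -, hdisj⟩ := hflower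
  have hex : ∀ j, ∃ i, vs j i ∈ F := by
    intro j
    by_contra h
    push_neg at h
    exact hFVS ⟨n j, vs j, es j, hinj j, heinj j,
      fun i => by simpa using h i, hends j⟩
  choose idx hidx using hex
  have hne : ∀ j, vs j (idx j) ≠ v := fun j h => hv (h ▸ hidx j)
  have hinj2 : ∀ j j', vs j (idx j) = vs j' (idx j') → j = j' := by
    intro j j' h
    by_contra hjj
    exact hne j (hdisj j j' hjj (idx j) (idx j') h)
  have hle : k + 1 ≤ F.card := by
    have := Finset.card_le_card_of_injOn (s := Finset.univ) (fun j : Fin (k + 1) => vs j (idx j))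
      (fun j _ => hidx j) (fun a _ b _ h => hinj2 a b h)
    simpa using this
  omega
end

section
/- Let G be a multigraph with no self-loops, no parallel edges, and minimum degree at least 3, and suppose G has a feedback vertex set of size at most k ≥ 1. Then the feedback vertex set contains at least one of the 3k vertices of highest degree. -/
open Finset SimpleGraph

private lemma sup_edge_isAcyclic {V : Type*} {G : SimpleGraph V} {u v : V}
    (hG : G.IsAcyclic) (h : ¬ G.Reachable u v) : (G ⊔ SimpleGraph.edge u v).IsAcyclic := by
  have hne : u ≠ v := fun e => h (e ▸ Reachable.refl _)
  intro a c hc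
  by_cases he : s(u, v) ∈ c.edges
  · have h2 : (G ⊔ SimpleGraph.edge u v).Adj u v ∧
      ((G ⊔ SimpleGraph.edge u v) \ SimpleGraph.fromEdgeSet {s(u, v)}).Reachable u v :=
      SimpleGraph.adj_and_reachable_delete_edges_iff_exists_cycle.2 ⟨a, c, hc, he⟩
    apply h
    refine h2.2.mono ?_
    intro x y hxy
    rcases hxy with ⟨hxy1 | hxy2, hxy3⟩
    · exact hxy1
    · exfalso
      rw [SimpleGraph.edge_adj] at hxy2
      rcases hxy2.1 with ⟨rfl, rfl⟩ | ⟨rfl, rfl⟩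
      · exact hxy3 (by simp [hxy2.2])
      · exact hxy3 (by simp [Sym2.eq_swap, hxy2.2])
  · have hsub : ∀ e ∈ c.edges, e ∈ G.edgeSet := by
      intro e hce
      have h1 := c.edges_subset_edgeSet hce
      rw [SimpleGraph.edgeSet_sup] at h1
      rcases h1 with h1 | h1
      · exact h1
      · rw [SimpleGraph.edge_edgeSet_of_ne hne, Set.mem_singleton_iff] at h1
        exact absurd (h1 ▸ hce) he
    exact hG (c.transfer G hsub) (hc.transfer hsub)

private lemma card_edgeFinset_indep {V : Type*} (G : SimpleGraph V)
    (i1 i2 : Fintype G.edgeSet) :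
    (@SimpleGraph.edgeFinset V G i1).card = (@SimpleGraph.edgeFinset V G i2).card := by
  simp only [SimpleGraph.edgeFinset, Set.toFinset_card]
  exact @Fintype.card_congr _ _ i1 i2 (Equiv.refl _)

private lemma acyclic_aux {V : Type*} [Fintype V] [Nonempty V] [DecidableEq V] :
    ∀ (m : ℕ) (G : SimpleGraph V) [DecidableRel G.Adj],
      (Fintype.card V).choose 2 ≤ G.edgeFinset.card + m →
      G.IsAcyclic → G.edgeFinset.card + 1 ≤ Fintype.card V := by
  intro m
  induction m with
  | zero =>
    intro G _ hbound hG
    by_cases hp : G.Preconnected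
    · have ht : G.IsTree := ⟨⟨hp⟩, hG⟩
      exact (ht.card_edgeFinset).le
    · obtain ⟨u, v, hr⟩ : ∃ u v, ¬ G.Reachable u v := by
        simpa [SimpleGraph.Preconnected] using hp
      have hne : u ≠ v := fun e => hr (e ▸ Reachable.refl _)
      have hadj : ¬ G.Adj u v := fun a => hr a.reachable
      have hcard := G.card_edgeFinset_sup_edge (t := v) (s := u) hadj hne
      have hEq := card_edgeFinset_indep (G ⊔ SimpleGraph.edge u v)
        (G.fintypeEdgeSetSup (SimpleGraph.edge u v)) (G ⊔ SimpleGraph.edge u v).fintypeEdgeSet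
      have hle := SimpleGraph.card_edgeFinset_le_card_choose_two (G := G ⊔ SimpleGraph.edge u v)
      omega
  | succ n ih =>
    intro G _ hbound hG
    by_cases hp : G.Preconnected
    · have ht : G.IsTree := ⟨⟨hp⟩, hG⟩
      exact (ht.card_edgeFinset).le
    · obtain ⟨u, v, hr⟩ : ∃ u v, ¬ G.Reachable u v := by
        simpa [SimpleGraph.Preconnected] using hp
      have hne : u ≠ v := fun e => hr (e ▸ Reachable.refl _)
      have hadj : ¬ G.Adj u v := fun a => hr a.reachable
      have hcard := G.card_edgeFinset_sup_edge (t := v) (s := u) hadj hne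
      have hEq := card_edgeFinset_indep (G ⊔ SimpleGraph.edge u v)
        (G.fintypeEdgeSetSup (SimpleGraph.edge u v)) (G ⊔ SimpleGraph.edge u v).fintypeEdgeSet
      have hacyc : (G ⊔ SimpleGraph.edge u v).IsAcyclic := sup_edge_isAcyclic hG hr
      have h9 := ih (G ⊔ SimpleGraph.edge u v) (by omega) hacyc
      omega

private lemma acyclic_card_le {V : Type*} [Fintype V] [Nonempty V] [DecidableEq V]
    (G : SimpleGraph V) [DecidableRel G.Adj] (hG : G.IsAcyclic) :
    G.edgeFinset.card + 1 ≤ Fintype.card V :=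
  acyclic_aux ((Fintype.card V).choose 2) G (Nat.le_add_left _ _) hG

/-- In a simple graph with minimum degree at least `3`, any feedback vertex set of
size at most `k ≥ 1` contains at least one of the `3k` vertices of highest degree
(`H` is a set of `3k` vertices such that every vertex outside `H` has degree at
most that of every vertex of `H`). -/
theorem stmt17 {V : Type*} [Fintype V] [DecidableEq V] (G : SimpleGraph V)
    [DecidableRel G.Adj] (k : ℕ) (hk : 1 ≤ k)
    (hmin : ∀ v, 3 ≤ G.degree v)
    (H : Finset V) (hH : H.card = 3 * k)
    (htop : ∀ u ∈ H, ∀ w, w ∉ H → G.degree w ≤ G.degree u)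
    (F : Finset V) (hF : F.card ≤ k)
    (hfvs : (G.induce ((↑F : Set V)ᶜ)).IsAcyclic) :
    ∃ v ∈ F, v ∈ H := by
  by_contra hcon
  push_neg at hcon
  classical
  -- minimum degree vertex of H
  have hHne : H.Nonempty := Finset.card_pos.1 (by omega)
  obtain ⟨u₀, hu₀H, hu₀min⟩ := Finset.exists_min_image H (fun u => G.degree u) hHne
  set d := G.degree u₀ with hd
  have hFdeg : ∀ v ∈ F, G.degree v ≤ d := fun v hv => htop u₀ hu₀H v (hcon v hv)
  set Sc : Finset V := Fᶜ with hSc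
  have hHsub : H ⊆ Sc := fun u hu => Finset.mem_compl.2 (fun hf => hcon u hf hu)
  -- the induced graph
  letI : DecidablePred (· ∈ ((↑F : Set V)ᶜ)) := fun v => decidable_of_iff (v ∉ F) (by simp)
  letI : DecidableRel (G.induce ((↑F : Set V)ᶜ)).Adj :=
    fun a b => inferInstanceAs (Decidable (G.Adj a b))
  have hu₀S : u₀ ∈ ((↑F : Set V)ᶜ) := by
    simpa using Finset.mem_compl.1 (hHsub hu₀H)
  haveI : Nonempty ((↑F : Set V)ᶜ : Set V) := ⟨⟨u₀, hu₀S⟩⟩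
  have hcardS : Fintype.card ((↑F : Set V)ᶜ : Set V) = Sc.card := by
    rw [Fintype.card_subtype]
    congr 1
    ext x
    simp [hSc]
  -- edge bound for the forest
  have hE : (G.induce ((↑F : Set V)ᶜ)).edgeFinset.card + 1 ≤ Sc.card := by
    rw [← hcardS]
    exact acyclic_card_le _ hfvs
  set e := (G.induce ((↑F : Set V)ᶜ)).edgeFinset.card with he
  -- degree of induced graph
  have hdeg : ∀ (x : ((↑F : Set V)ᶜ : Set V)),
      (G.induce ((↑F : Set V)ᶜ)).degree x = ((G.neighborFinset x.1) ∩ Sc).card := by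
    intro x
    rw [SimpleGraph.degree]
    refine Finset.card_bij (fun y _ => (y : V)) ?_ ?_ ?_
    · intro y hy
      rw [SimpleGraph.mem_neighborFinset] at hy
      have hadj : G.Adj x.1 y.1 := hy
      refine Finset.mem_inter.2 ⟨(SimpleGraph.mem_neighborFinset _ _ _).2 hadj, ?_⟩
      have := y.2
      simp only [Set.mem_compl_iff, Finset.coe_sort_coe, Set.mem_setOf_eq] at this
      simp only [hSc, Finset.mem_compl]
      simpa using this
    · intro a ha b hb hab
      exact Subtype.ext hab
    · intro b hb
      rw [Finset.mem_inter] at hb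
      have hbS : b ∈ ((↑F : Set V)ᶜ) := by
        have := hb.2
        simp only [hSc, Finset.mem_compl] at this
        simpa using this
      refine ⟨⟨b, hbS⟩, ?_, rfl⟩
      rw [SimpleGraph.mem_neighborFinset]
      have hadj : G.Adj x.1 b := by simpa using hb.1
      exact hadj
  -- sum over Sc of internal neighbor counts equals 2e
  have hsum2e : ∑ v ∈ Sc, ((G.neighborFinset v) ∩ Sc).card = 2 * e := by
    rw [he, ← SimpleGraph.sum_degrees_eq_twice_card_edges]
    rw [Finset.sum_subtype (p := fun v => v ∈ ((↑F : Set V)ᶜ)) Sc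
      (by intro x; simp [hSc]) (fun v => ((G.neighborFinset v) ∩ Sc).card)]
    exact Finset.sum_congr rfl (fun x _ => (hdeg x).symm)
  -- degree splitting
  have hsplit : ∀ v : V, G.degree v
      = ((G.neighborFinset v) ∩ Sc).card + ((G.neighborFinset v) ∩ F).card := by
    intro v
    rw [SimpleGraph.degree, ← Finset.card_sdiff_add_card_inter (G.neighborFinset v) F]
    congr 2
    rw [Finset.sdiff_eq_inter_compl]
  -- cross edges, both ways
  have hfilter : ∀ (v : V) (t : Finset V),
      (G.neighborFinset v) ∩ t = t.filter (G.Adj v) := by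
    intro v t
    ext u
    simp [Finset.mem_inter, SimpleGraph.mem_neighborFinset, and_comm]
  have hcross : ∑ v ∈ Sc, ((G.neighborFinset v) ∩ F).card
      = ∑ u ∈ F, ((G.neighborFinset u) ∩ Sc).card := by
    simp only [hfilter, Finset.card_filter]
    rw [Finset.sum_comm]
    refine Finset.sum_congr rfl (fun u _ => Finset.sum_congr rfl (fun v _ => ?_))
    simp [SimpleGraph.adj_comm]
  set c := ∑ v ∈ Sc, ((G.neighborFinset v) ∩ F).card with hc
  -- (1) 3 |Sc| ≤ sum of degrees over Sc = 2e + c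
  have h1 : 3 * Sc.card ≤ 2 * e + c := by
    calc 3 * Sc.card = Sc.card * 3 := by ring
    _ ≤ ∑ v ∈ Sc, G.degree v := by
        simpa using Finset.card_nsmul_le_sum Sc (fun v => G.degree v) 3 (fun v _ => hmin v)
    _ = 2 * e + c := by
        rw [hc, ← hsum2e, ← Finset.sum_add_distrib]
        exact Finset.sum_congr rfl (fun v _ => hsplit v)
  -- (4) c ≤ k * d
  have h4 : c ≤ k * d := by
    calc c = ∑ u ∈ F, ((G.neighborFinset u) ∩ Sc).card := hcross
    _ ≤ ∑ u ∈ F, G.degree u :=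
        Finset.sum_le_sum (fun u _ => Finset.card_le_card Finset.inter_subset_left)
    _ ≤ ∑ _u ∈ F, d := Finset.sum_le_sum (fun u hu => hFdeg u hu)
    _ = F.card * d := by rw [Finset.sum_const, smul_eq_mul]
    _ ≤ k * d := Nat.mul_le_mul_right d hF
  -- (5)+(6): 3 k d ≤ 2e + c
  have h5 : 3 * (k * d) ≤ ∑ u ∈ H, G.degree u := by
    have := Finset.card_nsmul_le_sum H (fun u => G.degree u) d (fun u hu => hu₀min u hu)
    rw [hH] at this
    simpa [mul_assoc] using this
  have h6 : ∑ u ∈ H, G.degree u ≤ 2 * e + c := by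
    calc ∑ u ∈ H, G.degree u
        = ∑ u ∈ H, (((G.neighborFinset u) ∩ Sc).card + ((G.neighborFinset u) ∩ F).card) :=
          Finset.sum_congr rfl (fun u _ => hsplit u)
    _ = ∑ u ∈ H, ((G.neighborFinset u) ∩ Sc).card + ∑ u ∈ H, ((G.neighborFinset u) ∩ F).card :=
          Finset.sum_add_distrib
    _ ≤ ∑ v ∈ Sc, ((G.neighborFinset v) ∩ Sc).card + ∑ v ∈ Sc, ((G.neighborFinset v) ∩ F).card := by
          gcongr
    _ = 2 * e + c := by rw [hsum2e, hc]
  omega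
end

section
/- Let G = (V,E) be a graph, S a vertex cover of G, and u, v ∈ S non-adjacent vertices with more than k common neighbors in V \ S, where tw(G) ≤ k. Then adding the edge {u,v} to G does not increase the tree width above k, i.e., tw(G + {u,v}) ≤ k. -/
/-- `(T, B)` is a tree decomposition of `G`. -/
def IsTreeDecomp {V ι : Type*} (G : SimpleGraph V) (T : SimpleGraph ι)
    (B : ι → Finset V) : Prop :=
  T.IsTree ∧ (∀ v, ∃ n, v ∈ B n) ∧ (∀ u v, G.Adj u v → ∃ n, u ∈ B n ∧ v ∈ B n) ∧
    ∀ v, (T.induce {n | v ∈ B n}).Connected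

open SimpleGraph in
/-- In an acyclic graph, any walk between vertices lying on the two sides of an
edge `(c, d)` must pass through `c`. -/
lemma aux_bridge_cross {ι : Type*} {T : SimpleGraph ι} (hT : T.IsAcyclic)
    {c d : ι} (hcd : T.Adj c d) {x y : ι} (W : T.Walk x y)
    (hx : (T \ SimpleGraph.fromEdgeSet {s(c, d)}).Reachable x c)
    (hy : (T \ SimpleGraph.fromEdgeSet {s(c, d)}).Reachable y d) :
    c ∈ W.support := by
  by_cases he : s(c, d) ∈ W.edges
  · exact W.fst_mem_support_of_mem_edges he
  · exfalso
    have hbridge : T.IsBridge s(c, d) :=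
      (SimpleGraph.isAcyclic_iff_forall_adj_isBridge.mp hT) hcd
    refine (SimpleGraph.isBridge_iff.mp hbridge) ?_
    refine hx.symm.trans (SimpleGraph.Reachable.trans ?_ hy)
    exact ⟨W.toDeleteEdges {s(c, d)}
      (fun e hew hes => he (Set.mem_singleton_iff.mp hes ▸ hew))⟩

/-- Along a trail from a vertex satisfying `P` to one not satisfying `P`, there
is an "exit edge" `(c, d)` with `P c`, `¬ P d`, and a walk from `d` to the end
avoiding the edge. -/
lemma aux_exit_edge {ι : Type*} {T : SimpleGraph ι} {P : ι → Prop} :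
    ∀ {x y : ι} (W : T.Walk x y), W.IsTrail → P x → ¬ P y →
    ∃ c d, T.Adj c d ∧ P c ∧ ¬ P d ∧
      ∃ W' : T.Walk d y, s(c, d) ∉ W'.edges := by
  intro x y W
  induction W with
  | nil => intro _ hx hy; exact absurd hx hy
  | @cons a b y h W ih =>
    intro htrail hx hy
    rw [SimpleGraph.Walk.isTrail_cons] at htrail
    by_cases hb : P b
    · exact ih htrail.1 hb hy
    · exact ⟨a, b, h, hx, hb, W, htrail.2⟩

/-- A connected induced subgraph yields a walk in the ambient graph whose
support stays inside the set. -/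
lemma aux_walk_in_set {ι : Type*} {T : SimpleGraph ι} {A : Set ι}
    (hconn : (T.induce A).Connected) {x y : ι} (hx : x ∈ A) (hy : y ∈ A) :
    ∃ W : T.Walk x y, ∀ z ∈ W.support, z ∈ A := by
  obtain ⟨w⟩ := hconn ⟨x, hx⟩ ⟨y, hy⟩
  refine ⟨w.map (SimpleGraph.Embedding.induce A).toHom, ?_⟩
  intro z hz
  replace hz : z ∈ (w.map (SimpleGraph.Embedding.induce A).toHom).support := hz
  rw [SimpleGraph.Walk.support_map] at hz
  obtain ⟨⟨z', hz'⟩, _, rfl⟩ := List.mem_map.mp hz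
  exact hz'

/-- If `S` is a vertex cover of `G`, `u, v ∈ S` are non-adjacent with more than
`k` common neighbors in `V ∖ S`, and `tw(G) ≤ k` (witnessed by a tree
decomposition with bags of size at most `k + 1`), then adding the edge `{u, v}`
keeps the tree width at most `k`. -/
theorem stmt19 {V : Type*} [Fintype V] [DecidableEq V] (G : SimpleGraph V)
    [DecidableRel G.Adj] (k : ℕ) (S : Finset V)
    (hvc : ∀ a b, G.Adj a b → a ∈ S ∨ b ∈ S)
    (u v : V) (hu : u ∈ S) (hv : v ∈ S) (huv : u ≠ v) (hnadj : ¬ G.Adj u v)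
    (hcommon : k < ((G.neighborFinset u ∩ G.neighborFinset v) \ S).card)
    (htw : ∃ (ι : Type) (T : SimpleGraph ι) (B : ι → Finset V),
      IsTreeDecomp G T B ∧ ∀ n, (B n).card ≤ k + 1) :
    ∃ (ι : Type) (T : SimpleGraph ι) (B : ι → Finset V),
      IsTreeDecomp (G ⊔ SimpleGraph.fromEdgeSet {s(u, v)}) T B ∧
        ∀ n, (B n).card ≤ k + 1 := by
  classical
  obtain ⟨ι, T, B, ⟨hTree, hcover, hedge, hconn⟩, hcard⟩ := htw
  -- Key claim: some bag contains both `u` and `v`.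
  have key : ∃ n, u ∈ B n ∧ v ∈ B n := by
    by_contra hno
    push_neg at hno
    obtain ⟨p, hp⟩ := hcover u
    obtain ⟨q, hq⟩ := hcover v
    obtain ⟨W0⟩ := hTree.isConnected p q
    have hqnot : ¬ u ∈ B q := fun h => hno q h hq
    obtain ⟨c, d, hcd, hc, hd, Wd, hWd⟩ :=
      aux_exit_edge (P := fun n => u ∈ B n) W0.bypass
        (W0.bypass_isPath.isTrail) hp hqnot
    -- every node whose bag contains `u` reaches `c` in the cut graph
    have Ru : ∀ n, u ∈ B n →
        (T \ SimpleGraph.fromEdgeSet {s(c, d)}).Reachable n c := by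
      intro n hn
      obtain ⟨W, hWset⟩ := aux_walk_in_set (hconn u) hn hc
      refine ⟨W.toDeleteEdges {s(c, d)} (fun e hew hes => ?_)⟩
      rw [Set.mem_singleton_iff] at hes
      subst hes
      exact hd (hWset d (W.snd_mem_support_of_mem_edges hew))
    -- every node whose bag contains `v` reaches `d` in the cut graph
    have Rv : ∀ m, v ∈ B m →
        (T \ SimpleGraph.fromEdgeSet {s(c, d)}).Reachable m d := by
      intro m hm
      obtain ⟨W, hWset⟩ := aux_walk_in_set (hconn v) hm hq
      have h1 : (T \ SimpleGraph.fromEdgeSet {s(c, d)}).Reachable m q := by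
        refine ⟨W.toDeleteEdges {s(c, d)} (fun e hew hes => ?_)⟩
        rw [Set.mem_singleton_iff] at hes
        subst hes
        exact hno c hc (hWset c (W.fst_mem_support_of_mem_edges hew))
      refine h1.trans ⟨Wd.reverse.toDeleteEdges {s(c, d)} (fun e hew hes => ?_)⟩
      rw [Set.mem_singleton_iff] at hes
      subst hes
      rw [SimpleGraph.Walk.edges_reverse, List.mem_reverse] at hew
      exact hWd hew
    -- every common neighbor of `u` and `v` lies in the bag `B c`
    have hwbag : ∀ w ∈ (G.neighborFinset u ∩ G.neighborFinset v) \ S,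
        w ∈ B c := by
      intro w hw
      rw [Finset.mem_sdiff, Finset.mem_inter, SimpleGraph.mem_neighborFinset,
        SimpleGraph.mem_neighborFinset] at hw
      obtain ⟨⟨hwu, hwv⟩, _⟩ := hw
      obtain ⟨n, hn1, hn2⟩ := hedge u w hwu
      obtain ⟨m, hm1, hm2⟩ := hedge v w hwv
      obtain ⟨W, hWset⟩ := aux_walk_in_set (hconn w) hn2 hm2
      have hcmem : c ∈ W.support :=
        aux_bridge_cross hTree.IsAcyclic hcd W (Ru n hn1) (Rv m hm1)
      exact hWset c hcmem
    -- counting contradiction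
    have hsub : insert u ((G.neighborFinset u ∩ G.neighborFinset v) \ S)
        ⊆ B c := by
      intro z hz
      rcases Finset.mem_insert.mp hz with rfl | hz
      · exact hc
      · exact hwbag z hz
    have hnotmem : u ∉ (G.neighborFinset u ∩ G.neighborFinset v) \ S := by
      intro h
      exact (Finset.mem_sdiff.mp h).2 hu
    have hcardge := Finset.card_le_card hsub
    rw [Finset.card_insert_of_notMem hnotmem] at hcardge
    have := hcard c
    omega
  -- use the same decomposition
  refine ⟨ι, T, B, ⟨hTree, hcover, ?_, hconn⟩, hcard⟩
  intro a b hab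
  rw [SimpleGraph.sup_adj] at hab
  rcases hab with h | h
  · exact hedge a b h
  · rw [SimpleGraph.fromEdgeSet_adj, Set.mem_singleton_iff, Sym2.eq_iff] at h
    obtain ⟨n, hn1, hn2⟩ := key
    rcases h.1 with ⟨rfl, rfl⟩ | ⟨rfl, rfl⟩
    · exact ⟨n, hn1, hn2⟩
    · exact ⟨n, hn2, hn1⟩
end
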